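/- On the Lie algebra so(5) with the inner product ⟨X,Y⟩ = -½ tr(XY), there exists an orthogonal complex structure J' on the orthogonal complement t^⊥ of a Cartan subalgebra t such that the contraction J' ⌟ σ of J' with the canonical 3-form σ(X,Y,Z) = ⟨[X,Y],Z⟩ vanishes. -/

import Mathlib

open scoped InnerProductSpace

noncomputable section

/-- The elementary alternating 3-form `e^{ijk}` on `ℝ¹⁰` evaluated on `(x,y,z)`. -/
def tripleSO5 (i j k : Fin 10) (x y z : EuclideanSpace ℝ (Fin 10)) : ℝ :=
  x i * y j * z k - x i * y k * z j + x j * y k * z i - x j * y i * z k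
    + x k * y i * z j - x k * y j * z i

/-- The canonical 3-form of `so(5)` in the orthonormal basis `(t₁, t₂, x₁, …, x₈)`
(coordinates `0, 1` span the Cartan subalgebra `t`, coordinates `2, …, 9` its orthogonal
complement `t^⊥`):
`σ = e₁∧(x^{12}+x^{57}+x^{68}) + e₂∧(x^{34}+x^{56}+x^{78}) + x^{135}+x^{146}+x^{237}+x^{248}`. -/
def sigmaSO5 (x y z : EuclideanSpace ℝ (Fin 10)) : ℝ :=
  tripleSO5 0 2 3 x y z + tripleSO5 0 6 8 x y z + tripleSO5 0 7 9 x y z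
    + tripleSO5 1 4 5 x y z + tripleSO5 1 6 7 x y z + tripleSO5 1 8 9 x y z
    + tripleSO5 2 4 6 x y z + tripleSO5 2 5 7 x y z + tripleSO5 3 4 8 x y z
    + tripleSO5 3 5 9 x y z

/-- The complex structure `J' = x^{17}+x^{26}+x^{38}+x^{45}` on `t^⊥`, as a map on `ℝ¹⁰`. -/
def Jfun (v : EuclideanSpace ℝ (Fin 10)) : EuclideanSpace ℝ (Fin 10) :=
  (WithLp.equiv 2 (Fin 10 → ℝ)).symm fun i =>
    if i = 2 then -v 8 else if i = 3 then -v 7 else if i = 4 then -v 9 else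
    if i = 5 then -v 6 else if i = 6 then v 5 else if i = 7 then v 3 else
    if i = 8 then v 2 else if i = 9 then v 4 else 0

lemma Jfun_apply (v : EuclideanSpace ℝ (Fin 10)) (i : Fin 10) :
    Jfun v i =
    if i = 2 then -v 8 else if i = 3 then -v 7 else if i = 4 then -v 9 else
    if i = 5 then -v 6 else if i = 6 then v 5 else if i = 7 then v 3 else
    if i = 8 then v 2 else if i = 9 then v 4 else 0 := rfl

lemma euc_add (x y : EuclideanSpace ℝ (Fin 10)) (i : Fin 10) : (x + y) i = x i + y i := rfl
lemma euc_smul (c : ℝ) (x : EuclideanSpace ℝ (Fin 10)) (i : Fin 10) : (c • x) i = c * x i := rfl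
lemma euc_neg (x : EuclideanSpace ℝ (Fin 10)) (i : Fin 10) : (-x) i = -(x i) := rfl
lemma euc_zero (i : Fin 10) : (0 : EuclideanSpace ℝ (Fin 10)) i = 0 := rfl

lemma Jfun_add (v w : EuclideanSpace ℝ (Fin 10)) : Jfun (v + w) = Jfun v + Jfun w := by
  ext i
  rw [euc_add, Jfun_apply, Jfun_apply, Jfun_apply, euc_add, euc_add, euc_add, euc_add,
    euc_add, euc_add, euc_add, euc_add]
  split_ifs <;> ring

lemma Jfun_smul (c : ℝ) (v : EuclideanSpace ℝ (Fin 10)) : Jfun (c • v) = c • Jfun v := by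
  ext i
  rw [euc_smul, Jfun_apply, Jfun_apply, euc_smul, euc_smul, euc_smul, euc_smul,
    euc_smul, euc_smul, euc_smul, euc_smul]
  split_ifs <;> ring

def Jmap : EuclideanSpace ℝ (Fin 10) →ₗ[ℝ] EuclideanSpace ℝ (Fin 10) :=
  { toFun := Jfun, map_add' := Jfun_add, map_smul' := Jfun_smul }

lemma Jmap_apply (v : EuclideanSpace ℝ (Fin 10)) : Jmap v = Jfun v := rfl

lemma sum10 (f : Fin 10 → ℝ) :
    ∑ i, f i = f 0 + f 1 + f 2 + f 3 + f 4 + f 5 + f 6 + f 7 + f 8 + f 9 := by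
  have h : (Finset.univ : Finset (Fin 10)) = {0,1,2,3,4,5,6,7,8,9} := by decide
  rw [h]
  rw [Finset.sum_insert (by decide), Finset.sum_insert (by decide),
    Finset.sum_insert (by decide), Finset.sum_insert (by decide),
    Finset.sum_insert (by decide), Finset.sum_insert (by decide),
    Finset.sum_insert (by decide), Finset.sum_insert (by decide),
    Finset.sum_insert (by decide), Finset.sum_singleton]
  ring

set_option maxHeartbeats 1000000 in
/-- On `so(5)` with the inner product `⟪X,Y⟫ = -½ tr(XY)`, there is an
orthogonal complex structure `J'` on the orthogonal complement `t^⊥` of a Cartan subalgebra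
`t` whose contraction with the canonical 3-form `σ` vanishes. -/
theorem stmt_14 :
    ∃ J' : EuclideanSpace ℝ (Fin 10) →ₗ[ℝ] EuclideanSpace ℝ (Fin 10),
      -- J' vanishes on t = span{e₀, e₁}
      (J' (EuclideanSpace.single 0 (1:ℝ)) = 0) ∧
      (J' (EuclideanSpace.single 1 (1:ℝ)) = 0) ∧
      -- J' takes values in t^⊥
      (∀ v, (J' v) 0 = 0 ∧ (J' v) 1 = 0) ∧
      -- J' is a complex structure on t^⊥
      (∀ v : EuclideanSpace ℝ (Fin 10), v 0 = 0 → v 1 = 0 → J' (J' v) = -v) ∧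
      -- J' is orthogonal on t^⊥
      (∀ v w : EuclideanSpace ℝ (Fin 10), v 0 = 0 → v 1 = 0 → w 0 = 0 → w 1 = 0 →
        ⟪J' v, J' w⟫_ℝ = ⟪v, w⟫_ℝ) ∧
      -- the contraction J' ⌟ σ vanishes
      (∀ W : EuclideanSpace ℝ (Fin 10),
        (∑ i : Fin 10, ∑ j : Fin 10,
          if i < j then
            ⟪J' (EuclideanSpace.single i (1:ℝ)), EuclideanSpace.single j (1:ℝ)⟫_ℝ *
              sigmaSO5 (EuclideanSpace.single i (1:ℝ)) (EuclideanSpace.single j (1:ℝ)) W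
          else 0) = 0) := by
  refine ⟨Jmap, ?_, ?_, ?_, ?_, ?_, ?_⟩
  · ext i
    rw [Jmap_apply, euc_zero, Jfun_apply]
    split_ifs <;> simp [EuclideanSpace.single_apply]
  · ext i
    rw [Jmap_apply, euc_zero, Jfun_apply]
    split_ifs <;> simp [EuclideanSpace.single_apply]
  · intro v
    constructor <;> · rw [Jmap_apply, Jfun_apply]; simp
  · intro v h0 h1
    ext i
    rw [Jmap_apply, Jmap_apply, euc_neg]
    have hi : i = 0 ∨ i = 1 ∨ i = 2 ∨ i = 3 ∨ i = 4 ∨ i = 5 ∨ i = 6 ∨ i = 7 ∨ i = 8 ∨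
        i = 9 := by fin_cases i <;> decide
    rcases hi with h|h|h|h|h|h|h|h|h|h <;> subst h <;> simp [Jfun_apply, h0, h1]
  · intro v w hv0 hv1 hw0 hw1
    rw [Jmap_apply, Jmap_apply]
    simp only [PiLp.inner_apply, RCLike.inner_apply, conj_trivial, sum10, Jfun_apply]
    simp [hv0, hv1, hw0, hw1]
    ring
  · intro W
    have key : ∀ i j : Fin 10,
        ⟪Jmap (EuclideanSpace.single i (1:ℝ)), EuclideanSpace.single j (1:ℝ)⟫_ℝ
          = Jfun (EuclideanSpace.single i (1:ℝ)) j := by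
      intro i j
      rw [Jmap_apply, EuclideanSpace.inner_single_right]
      simp
    simp only [key, sum10]
    simp only [Jfun_apply, EuclideanSpace.single_apply]
    simp only [Fin.reduceEq, reduceIte, Fin.reduceLT, neg_zero, neg_neg]
    simp [sigmaSO5, tripleSO5, EuclideanSpace.single_apply]
end
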